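/- (OSSS inequality) Let f : {−1,1}^n → {−1,1} be computable by a decision tree of size s with s ≥ 2. Then max_{i ∈ [n]} Inf_i(f) ≥ Var(f) / (2 log₂ s), where Var(f) denotes the variance of the random variable f(x) for x uniform on {−1,1}^n. -/

import Mathlib

/-!
Decision trees over {-1,1}^n, where a point of the cube is encoded as `x : Fin n → Bool`
(`true` encodes 1, `false` encodes -1).
-/

/-- Decision trees with values in `Y` over `n` boolean variables. -/
inductive DTree (Y : Type) (n : ℕ) : Type
  | leaf : Y → DTree Y n
  | node : Fin n → DTree Y n → DTree Y n → DTree Y n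

namespace DTree

variable {Y : Type} {n : ℕ}

/-- The function computed by a decision tree: at a node labeled `i`, follow the right
subtree if `x_i = 1` (`x i = true`) and the left subtree if `x_i = -1` (`x i = false`). -/
def eval : DTree Y n → (Fin n → Bool) → Y
  | .leaf y, _ => y
  | .node i l r, x => if x i then r.eval x else l.eval x

/-- The size of a decision tree is its number of leaves. -/
def size : DTree Y n → ℕ
  | .leaf _ => 1
  | .node _ l r => l.size + r.size

end DTree

/-- The ±1 real value encoded by a boolean: `true ↦ 1`, `false ↦ -1`. -/
noncomputable def bval (b : Bool) : ℝ := if b then 1 else -1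

/-- The influence of variable `i` on `f`: `Pr[f(x) ≠ f(x^{~i})]`, where `x` is uniform and
`x^{~i}` is `x` with its `i`-th coordinate rerandomized. -/
noncomputable def infl {n : ℕ} (f : (Fin n → Bool) → Bool) (i : Fin n) : ℝ :=
  (∑ x : Fin n → Bool,
      ((if f x = f (Function.update x i true) then (0 : ℝ) else 1) +
        (if f x = f (Function.update x i false) then (0 : ℝ) else 1)) / 2) / 2 ^ n

namespace OSSS
open Finset

variable {n : ℕ} {Y : Type}

noncomputable def Ex (u : (Fin n → Bool) → ℝ) : ℝ := (∑ x, u x) / 2 ^ n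

lemma Ex_mono {u v : (Fin n → Bool) → ℝ} (h : ∀ x, u x ≤ v x) : Ex u ≤ Ex v := by
  unfold Ex
  have h1 : (∑ x, u x) ≤ ∑ x, v x := Finset.sum_le_sum fun x _ => h x
  have h2 : (0:ℝ) ≤ 2 ^ n := by positivity
  exact div_le_div_of_nonneg_right h1 (by positivity) |>.trans_eq rfl

lemma Ex_add (u v : (Fin n → Bool) → ℝ) : Ex (fun x => u x + v x) = Ex u + Ex v := by
  unfold Ex; rw [Finset.sum_add_distrib]; ring

lemma Ex_sub (u v : (Fin n → Bool) → ℝ) : Ex (fun x => u x - v x) = Ex u - Ex v := by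
  unfold Ex; rw [Finset.sum_sub_distrib]; ring

lemma Ex_const (c : ℝ) : Ex (fun _ : Fin n → Bool => c) = c := by
  unfold Ex
  rw [Finset.sum_const]
  simp [Fintype.card_pi]

/-- the flip-at-`i` involution -/
def flip (i : Fin n) (x : Fin n → Bool) : Fin n → Bool := Function.update x i (!(x i))

lemma flip_invol (i : Fin n) : Function.Involutive (flip i) := by
  intro x
  unfold flip
  simp [Function.update_idem]

lemma sum_split (i : Fin n) (u : (Fin n → Bool) → ℝ) :
    (∑ x, u (Function.update x i false)) + (∑ x, u (Function.update x i true))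
      = 2 * ∑ x, u x := by
  have key : ∀ x : Fin n → Bool,
      u (Function.update x i false) + u (Function.update x i true) = u x + u (flip i x) := by
    intro x
    cases hxi : x i
    · have h1 : Function.update x i false = x := by
        rw [← hxi]; exact Function.update_eq_self i x
      have h2 : flip i x = Function.update x i true := by unfold flip; rw [hxi]; rfl
      rw [h1, h2]
    · have h1 : Function.update x i true = x := by
        rw [← hxi]; exact Function.update_eq_self i x
      have h2 : flip i x = Function.update x i false := by unfold flip; rw [hxi]; rfl
      rw [h1, h2]; ring
  have hflip : ∑ x, u (flip i x) = ∑ x, u x :=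
    Fintype.sum_bijective (flip i) (flip_invol i).bijective _ _ (fun x => rfl)
  calc (∑ x, u (Function.update x i false)) + (∑ x, u (Function.update x i true))
      = ∑ x, (u (Function.update x i false) + u (Function.update x i true)) := by
        rw [Finset.sum_add_distrib]
    _ = ∑ x, (u x + u (flip i x)) := Finset.sum_congr rfl fun x _ => key x
    _ = (∑ x, u x) + ∑ x, u (flip i x) := by rw [Finset.sum_add_distrib]
    _ = 2 * ∑ x, u x := by rw [hflip]; ring

lemma Ex_split (i : Fin n) (u : (Fin n → Bool) → ℝ) :
    Ex u = (Ex (fun x => u (Function.update x i false))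
             + Ex (fun x => u (Function.update x i true))) / 2 := by
  unfold Ex
  simp only []
  rw [← add_div, sum_split i u]
  ring
noncomputable def inflR (f : (Fin n → Bool) → ℝ) (i : Fin n) : ℝ :=
  Ex (fun x => |f x - f (Function.update x i true)| + |f x - f (Function.update x i false)|) / 4

lemma inflR_nonneg (f : (Fin n → Bool) → ℝ) (i : Fin n) : 0 ≤ inflR f i := by
  unfold inflR
  have : (0:ℝ) = Ex (fun _ : Fin n → Bool => (0:ℝ)) / 4 := by rw [Ex_const]; ring
  rw [this]
  gcongr
  exact Ex_mono fun x => by positivity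

lemma infl_eq_inflR (f : (Fin n → Bool) → Bool) (i : Fin n) :
    infl f i = inflR (fun x => bval (f x)) i := by
  unfold infl inflR Ex
  have k : ∀ a b : Bool, |bval a - bval b| = 2 * (if a = b then (0:ℝ) else 1) := by
    intro a b
    cases a <;> cases b <;> norm_num [bval]
  simp only [k]
  have h2 : (∑ x : Fin n → Bool,
        ((2 * if f x = f (Function.update x i true) then (0:ℝ) else 1) +
          2 * if f x = f (Function.update x i false) then (0:ℝ) else 1))
      = 2 * ∑ x : Fin n → Bool,
        ((if f x = f (Function.update x i true) then (0:ℝ) else 1) +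
          if f x = f (Function.update x i false) then (0:ℝ) else 1) := by
    rw [Finset.mul_sum]
    exact Finset.sum_congr rfl fun x _ => by ring
  rw [h2, ← Finset.sum_div]
  ring

/-- Restricting a decision tree: `restrict T i b` computes `x ↦ T.eval (update x i b)`,
and never queries `i`. -/
def restr : DTree Y n → Fin n → Bool → DTree Y n
  | .leaf y, _, _ => .leaf y
  | .node j l r, i, b =>
      if j = i then (if b then restr r i b else restr l i b)
      else .node j (restr l i b) (restr r i b)

lemma eval_restrict (T : DTree Y n) (i : Fin n) (b : Bool) (x : Fin n → Bool) :
    (restr T i b).eval x = T.eval (Function.update x i b) := by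
  induction T with
  | leaf y => rfl
  | node j l r ihl ihr =>
      by_cases hj : j = i
      · subst hj
        cases b <;> simp [restr, DTree.eval, ihl, ihr, Function.update_self]
      · have hx : Function.update x i b j = x j := Function.update_of_ne hj b x
        simp only [restr, if_neg hj, DTree.eval, hx, ihl, ihr]

lemma size_pos (T : DTree Y n) : 1 ≤ T.size := by
  induction T with
  | leaf y => exact le_refl 1
  | node j l r ihl ihr => unfold DTree.size; omega

lemma size_restrict_le (T : DTree Y n) (i : Fin n) (b : Bool) :
    (restr T i b).size ≤ T.size := by
  induction T with
  | leaf y => exact le_refl 1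
  | node j l r ihl ihr =>
      by_cases hj : j = i
      · have hl := size_pos l; have hr := size_pos r
        cases b <;> simp [restr, hj, DTree.size] <;> omega
      · simp only [restr, if_neg hj, DTree.size]; omega

lemma logb_node (a b : ℝ) (ha : 1 ≤ a) (hb : 1 ≤ b) :
    1 + (Real.logb 2 a + Real.logb 2 b) / 2 ≤ Real.logb 2 (a + b) := by
  have hl2 : (0:ℝ) < Real.log 2 := Real.log_pos one_lt_two
  have ha0 : (0:ℝ) < a := by linarith
  have hb0 : (0:ℝ) < b := by linarith
  have sa : Real.sqrt a ^ 2 = a := Real.sq_sqrt ha0.le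
  have sb : Real.sqrt b ^ 2 = b := Real.sq_sqrt hb0.le
  have hsab : Real.sqrt a * Real.sqrt b = Real.sqrt (a * b) :=
    (Real.sqrt_mul ha0.le b).symm
  have key : 2 * Real.sqrt (a * b) ≤ a + b := by
    nlinarith [sq_nonneg (Real.sqrt a - Real.sqrt b)]
  have hsprod : (0:ℝ) < Real.sqrt (a * b) := Real.sqrt_pos.mpr (by positivity)
  have key2 : Real.log 2 + (Real.log a + Real.log b) / 2 ≤ Real.log (a + b) := by
    have h1 : Real.log 2 + (Real.log a + Real.log b) / 2
        = Real.log (2 * Real.sqrt (a * b)) := by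
      rw [Real.log_mul (by norm_num) (ne_of_gt hsprod), Real.log_sqrt (by positivity),
        Real.log_mul (ne_of_gt ha0) (ne_of_gt hb0)]
    rw [h1]
    exact (Real.log_le_log_iff (by positivity) (by positivity)).mpr key
  simp only [Real.logb]
  rw [← add_div, ← sub_nonneg]
  have heq : Real.log (a + b) / Real.log 2 - (1 + (Real.log a + Real.log b) / Real.log 2 / 2)
      = (Real.log (a + b) - (Real.log 2 + (Real.log a + Real.log b) / 2)) / Real.log 2 := by
    field_simp
  rw [heq]
  exact div_nonneg (by linarith) hl2.le

lemma Ex_div (u : (Fin n → Bool) → ℝ) (c : ℝ) :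
    Ex (fun x => u x / c) = Ex u / c := by
  unfold Ex; rw [← Finset.sum_div]; ring

lemma abs_sub_resample (f : (Fin n → Bool) → ℝ) (i : Fin n) (x : Fin n → Bool) :
    |f x - (f (Function.update x i false) + f (Function.update x i true)) / 2|
      ≤ (|f x - f (Function.update x i true)| + |f x - f (Function.update x i false)|) / 2 := by
  have h : f x - (f (Function.update x i false) + f (Function.update x i true)) / 2
      = ((f x - f (Function.update x i true)) + (f x - f (Function.update x i false))) / 2 := by
    ring
  rw [h, abs_div, abs_two]
  have := abs_add_le (f x - f (Function.update x i true)) (f x - f (Function.update x i false))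
  linarith

lemma step_root (f : (Fin n → Bool) → ℝ) (i : Fin n) (G : (Fin n → Bool) → ℝ)
    (hG : ∀ x, |G x| ≤ 1) :
    Ex (fun x => f x * G x)
      - Ex (fun x => ((f (Function.update x i false) + f (Function.update x i true)) / 2) * G x)
      ≤ 2 * inflR f i := by
  have hEx : Ex (fun x => f x * G x)
      - Ex (fun x => ((f (Function.update x i false) + f (Function.update x i true)) / 2) * G x)
      = Ex (fun x =>
          (f x - (f (Function.update x i false) + f (Function.update x i true)) / 2) * G x) := by
    rw [← Ex_sub]
    congr 1
    funext x
    ring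
  rw [hEx]
  have hmono : Ex (fun x =>
      (f x - (f (Function.update x i false) + f (Function.update x i true)) / 2) * G x)
      ≤ Ex (fun x =>
        (|f x - f (Function.update x i true)| + |f x - f (Function.update x i false)|) / 2) := by
    apply Ex_mono
    intro x
    have h1 : (f x - (f (Function.update x i false) + f (Function.update x i true)) / 2) * G x
        ≤ |f x - (f (Function.update x i false) + f (Function.update x i true)) / 2| := by
      calc (f x - (f (Function.update x i false) + f (Function.update x i true)) / 2) * G x
          ≤ |(f x - (f (Function.update x i false) + f (Function.update x i true)) / 2) * G x| :=
            le_abs_self _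
        _ = |f x - (f (Function.update x i false) + f (Function.update x i true)) / 2| * |G x| :=
            abs_mul _ _
        _ ≤ |f x - (f (Function.update x i false) + f (Function.update x i true)) / 2| * 1 :=
            mul_le_mul_of_nonneg_left (hG x) (abs_nonneg _)
        _ = _ := mul_one _
    exact h1.trans (abs_sub_resample f i x)
  refine hmono.trans ?_
  rw [Ex_div]
  unfold inflR
  ring_nf
  exact le_refl _

lemma inflR_resample_le (f : (Fin n → Bool) → ℝ) (i j : Fin n) :
    inflR (fun x => (f (Function.update x i false) + f (Function.update x i true)) / 2) j
      ≤ inflR f j := by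
  by_cases hij : j = i
  · subst hij
    have hz : ∀ (c : Bool) (x : Fin n → Bool),
        (fun x => (f (Function.update x j false) + f (Function.update x j true)) / 2)
          (Function.update x j c)
        = (fun x => (f (Function.update x j false) + f (Function.update x j true)) / 2) x := by
      intro c x
      simp only [Function.update_idem]
    have hzero : inflR (fun x => (f (Function.update x j false) + f (Function.update x j true)) / 2) j = 0 := by
      unfold inflR
      have heq : (fun x : Fin n → Bool =>
          |(fun x => (f (Function.update x j false) + f (Function.update x j true)) / 2) x -
            (fun x => (f (Function.update x j false) + f (Function.update x j true)) / 2)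
              (Function.update x j true)| +
          |(fun x => (f (Function.update x j false) + f (Function.update x j true)) / 2) x -
            (fun x => (f (Function.update x j false) + f (Function.update x j true)) / 2)
              (Function.update x j false)|) = fun _ => 0 := by
        funext x
        rw [hz true x, hz false x]
        simp
      rw [heq, Ex_const]
      norm_num
    rw [hzero]
    exact inflR_nonneg f j
  · -- j ≠ i
    have main : ∀ c : Bool,
        (∑ x : Fin n → Bool, |(f (Function.update x i false) + f (Function.update x i true)) / 2
            - (f (Function.update (Function.update x j c) i false)
                + f (Function.update (Function.update x j c) i true)) / 2|)
        ≤ ∑ x : Fin n → Bool, |f x - f (Function.update x j c)| := by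
      intro c
      have pt : ∀ x : Fin n → Bool,
          |(f (Function.update x i false) + f (Function.update x i true)) / 2
            - (f (Function.update (Function.update x j c) i false)
                + f (Function.update (Function.update x j c) i true)) / 2|
          ≤ (|f (Function.update x i false)
                - f (Function.update (Function.update x i false) j c)|
             + |f (Function.update x i true)
                - f (Function.update (Function.update x i true) j c)|) / 2 := by
        intro x
        have e1 : Function.update (Function.update x j c) i false
            = Function.update (Function.update x i false) j c :=
          (Function.update_comm (fun h : i = j => hij h.symm) false c x).symm
        have e2 : Function.update (Function.update x j c) i true
            = Function.update (Function.update x i true) j c :=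
          (Function.update_comm (fun h : i = j => hij h.symm) true c x).symm
        rw [e1, e2]
        have h3 : (f (Function.update x i false) + f (Function.update x i true)) / 2
            - (f (Function.update (Function.update x i false) j c)
                + f (Function.update (Function.update x i true) j c)) / 2
            = ((f (Function.update x i false) - f (Function.update (Function.update x i false) j c))
              + (f (Function.update x i true) - f (Function.update (Function.update x i true) j c))) / 2 := by
          ring
        rw [h3, abs_div, abs_two]
        have := abs_add_le
          (f (Function.update x i false) - f (Function.update (Function.update x i false) j c))
          (f (Function.update x i true) - f (Function.update (Function.update x i true) j c))
        linarith
      calc (∑ x : Fin n → Bool, |(f (Function.update x i false) + f (Function.update x i true)) / 2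
            - (f (Function.update (Function.update x j c) i false)
                + f (Function.update (Function.update x j c) i true)) / 2|)
          ≤ ∑ x : Fin n → Bool,
            ((|f (Function.update x i false)
                - f (Function.update (Function.update x i false) j c)|
              + |f (Function.update x i true)
                - f (Function.update (Function.update x i true) j c)|) / 2) :=
            Finset.sum_le_sum fun x _ => pt x
        _ = ((∑ x : Fin n → Bool, |f (Function.update x i false)
                - f (Function.update (Function.update x i false) j c)|)
            + ∑ x : Fin n → Bool, |f (Function.update x i true)
                - f (Function.update (Function.update x i true) j c)|) / 2 := by
            rw [← Finset.sum_div, Finset.sum_add_distrib]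
        _ = ∑ x : Fin n → Bool, |f x - f (Function.update x j c)| := by
            rw [sum_split i (fun y => |f y - f (Function.update y j c)|)]
            ring
    unfold inflR Ex
    have hsum : (∑ x : Fin n → Bool,
        (|(f (Function.update x i false) + f (Function.update x i true)) / 2
            - (f (Function.update (Function.update x j true) i false)
                + f (Function.update (Function.update x j true) i true)) / 2|
         + |(f (Function.update x i false) + f (Function.update x i true)) / 2
            - (f (Function.update (Function.update x j false) i false)
                + f (Function.update (Function.update x j false) i true)) / 2|))
        ≤ ∑ x : Fin n → Bool,
          (|f x - f (Function.update x j true)| + |f x - f (Function.update x j false)|) := by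
      rw [Finset.sum_add_distrib, Finset.sum_add_distrib]
      exact add_le_add (main true) (main false)
    have h2n : (0:ℝ) < 2 ^ n := by positivity
    gcongr

lemma bval_abs_le (b : Bool) : |bval b| ≤ 1 := by
  cases b <;> simp [bval]

lemma main (N : ℕ) : ∀ (T : DTree Bool n), T.size ≤ N → ∀ (f : (Fin n → Bool) → ℝ) (M : ℝ),
    (∀ j, inflR f j ≤ M) → 0 ≤ M →
    Ex (fun x => f x * bval (T.eval x)) - Ex f * Ex (fun x => bval (T.eval x))
      ≤ 2 * M * Real.logb 2 (T.size : ℝ) := by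
  induction N with
  | zero =>
      intro T hT
      have := size_pos T
      omega
  | succ N ih =>
      intro T hT f M hM hM0
      cases T with
      | leaf y =>
          simp only [DTree.eval, DTree.size]
          have h1 : Ex (fun x : Fin n → Bool => f x * bval y) = Ex f * bval y := by
            unfold Ex; rw [← Finset.sum_mul]; ring
          have h2 : Ex (fun _ : Fin n → Bool => bval y) = bval y := Ex_const _
          rw [h1, h2]
          simp [Real.logb_one]
      | node i L R =>
          have hGL : ∀ x : Fin n → Bool,
              bval ((DTree.node i L R).eval (Function.update x i false))
                = bval ((restr L i false).eval x) := by
            intro x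
            have h : (DTree.node i L R).eval (Function.update x i false)
                = (restr L i false).eval x := by
              rw [eval_restrict]
              simp [DTree.eval, Function.update_self]
            rw [h]
          have hGR : ∀ x : Fin n → Bool,
              bval ((DTree.node i L R).eval (Function.update x i true))
                = bval ((restr R i true).eval x) := by
            intro x
            have h : (DTree.node i L R).eval (Function.update x i true)
                = (restr R i true).eval x := by
              rw [eval_restrict]
              simp [DTree.eval, Function.update_self]
            rw [h]
          have hidem : ∀ (b : Bool) (x : Fin n → Bool),
              (f (Function.update (Function.update x i b) i false)
                + f (Function.update (Function.update x i b) i true)) / 2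
              = (f (Function.update x i false) + f (Function.update x i true)) / 2 := by
            intro b x
            rw [Function.update_idem, Function.update_idem]
          -- step 1: replace f by its i-resampling
          have h1 := step_root f i (fun x => bval ((DTree.node i L R).eval x))
            (fun x => bval_abs_le _)
          -- step 2: split over the two branches
          have h2 : Ex (fun x => ((f (Function.update x i false) + f (Function.update x i true)) / 2)
                * bval ((DTree.node i L R).eval x))
              = (Ex (fun x => ((f (Function.update x i false) + f (Function.update x i true)) / 2)
                    * bval ((restr L i false).eval x))
                 + Ex (fun x => ((f (Function.update x i false) + f (Function.update x i true)) / 2)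
                    * bval ((restr R i true).eval x))) / 2 := by
            rw [Ex_split i (fun x => ((f (Function.update x i false) + f (Function.update x i true)) / 2)
                * bval ((DTree.node i L R).eval x))]
            congr 1
            congr 1
            · exact congrArg Ex (funext fun x => by rw [hidem false x, hGL x])
            · exact congrArg Ex (funext fun x => by rw [hidem true x, hGR x])
          have h3 : Ex (fun x => bval ((DTree.node i L R).eval x))
              = (Ex (fun x => bval ((restr L i false).eval x))
                 + Ex (fun x => bval ((restr R i true).eval x))) / 2 := by
            rw [Ex_split i (fun x => bval ((DTree.node i L R).eval x))]
            congr 1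
            congr 1
            · exact congrArg Ex (funext fun x => by rw [hGL x])
            · exact congrArg Ex (funext fun x => by rw [hGR x])
          have h4 : Ex (fun x => (f (Function.update x i false) + f (Function.update x i true)) / 2)
              = Ex f := by
            rw [Ex_split i f]
            unfold Ex
            simp only []
            rw [← Finset.sum_div, Finset.sum_add_distrib]
            ring
          have hML : ∀ j, inflR (fun x =>
              (f (Function.update x i false) + f (Function.update x i true)) / 2) j ≤ M :=
            fun j => le_trans (inflR_resample_le f i j) (hM j)
          have hsL := size_pos L
          have hsR := size_pos R
          have hL'le := size_restrict_le L i false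
          have hR'le := size_restrict_le R i true
          have hTsize : L.size + R.size ≤ N + 1 := by simpa [DTree.size] using hT
          have h5 := ih (restr L i false) (by omega)
            (fun x => (f (Function.update x i false) + f (Function.update x i true)) / 2)
            M hML hM0
          have h6 := ih (restr R i true) (by omega)
            (fun x => (f (Function.update x i false) + f (Function.update x i true)) / 2)
            M hML hM0
          rw [h4] at h5 h6
          have h8 : Real.logb 2 ((restr L i false).size : ℝ) ≤ Real.logb 2 (L.size : ℝ) :=
            Real.logb_le_logb_of_le one_lt_two
              (by exact_mod_cast Nat.lt_of_lt_of_le Nat.zero_lt_one (size_pos _))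
              (by exact_mod_cast hL'le)
          have h9 : Real.logb 2 ((restr R i true).size : ℝ) ≤ Real.logb 2 (R.size : ℝ) :=
            Real.logb_le_logb_of_le one_lt_two
              (by exact_mod_cast Nat.lt_of_lt_of_le Nat.zero_lt_one (size_pos _))
              (by exact_mod_cast hR'le)
          have h10 : 1 + (Real.logb 2 (L.size : ℝ) + Real.logb 2 (R.size : ℝ)) / 2
              ≤ Real.logb 2 ((L.size : ℝ) + (R.size : ℝ)) :=
            logb_node _ _ (by exact_mod_cast hsL) (by exact_mod_cast hsR)
          have p8 : M * Real.logb 2 ((restr L i false).size : ℝ)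
              ≤ M * Real.logb 2 (L.size : ℝ) := mul_le_mul_of_nonneg_left h8 hM0
          have p9 : M * Real.logb 2 ((restr R i true).size : ℝ)
              ≤ M * Real.logb 2 (R.size : ℝ) := mul_le_mul_of_nonneg_left h9 hM0
          have p10 : M * (1 + (Real.logb 2 (L.size : ℝ) + Real.logb 2 (R.size : ℝ)) / 2)
              ≤ M * Real.logb 2 ((L.size : ℝ) + (R.size : ℝ)) :=
            mul_le_mul_of_nonneg_left h10 hM0
          have hcast : ((DTree.node i L R).size : ℝ) = (L.size : ℝ) + (R.size : ℝ) := by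
            simp [DTree.size]
          rw [hcast, h3]
          have h7 : inflR f i ≤ M := hM i
          linarith [h1, h2, h5, h6, p8, p9, p10, h7]

end OSSS

/-- **OSSS inequality.** If `f : {-1,1}^n → {-1,1}` is computable by a decision tree of size
`s ≥ 2`, then `max_i Inf_i(f) ≥ Var(f) / (2 log₂ s)`, where
`Var(f) = E[f(x)²] − (E[f(x)])²` over uniform `x`. -/
theorem stmt2 {n : ℕ} (s : ℕ) (hs : 2 ≤ s)
    (f : (Fin n → Bool) → Bool) (T : DTree Bool n)
    (hsize : T.size = s) (hTf : ∀ x, T.eval x = f x) :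
    ((∑ x : Fin n → Bool, bval (f x) ^ 2) / 2 ^ n
        - ((∑ x : Fin n → Bool, bval (f x)) / 2 ^ n) ^ 2) / (2 * Real.logb 2 s)
      ≤ ⨆ i : Fin n, infl f i := by
  classical
  set M := ⨆ i : Fin n, infl f i with hMdef
  have hfin : ∀ i : Fin n, infl f i ≤ M :=
    fun i => le_ciSup (Set.Finite.bddAbove (Set.finite_range _)) i
  have hinfl_nonneg : ∀ i : Fin n, 0 ≤ infl f i := by
    intro i
    rw [OSSS.infl_eq_inflR]
    exact OSSS.inflR_nonneg _ i
  have hM0 : 0 ≤ M := by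
    rcases Nat.eq_zero_or_pos n with hn | hn
    · subst hn
      rw [hMdef, Real.iSup_of_isEmpty]
    · exact le_trans (hinfl_nonneg ⟨0, hn⟩) (hfin ⟨0, hn⟩)
  have hM : ∀ j : Fin n, OSSS.inflR (fun x => bval (f x)) j ≤ M := by
    intro j
    rw [← OSSS.infl_eq_inflR]
    exact hfin j
  have hmain := OSSS.main T.size T (le_refl _) (fun x => bval (f x)) M hM hM0
  simp only [hTf] at hmain
  rw [hsize] at hmain
  unfold OSSS.Ex at hmain
  have hlogpos : 0 < 2 * Real.logb 2 (s : ℝ) := by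
    have h1 : (1:ℝ) = Real.logb 2 2 := (Real.logb_self_eq_one one_lt_two).symm
    have h2 : Real.logb 2 (2:ℝ) ≤ Real.logb 2 (s : ℝ) :=
      Real.logb_le_logb_of_le one_lt_two (by norm_num) (by exact_mod_cast hs)
    nlinarith
  rw [div_le_iff₀ hlogpos]
  have hsq : (∑ x : Fin n → Bool, bval (f x) ^ 2)
      = ∑ x : Fin n → Bool, bval (f x) * bval (f x) :=
    Finset.sum_congr rfl fun x _ => by ring
  have hsq2 : ((∑ x : Fin n → Bool, bval (f x)) / 2 ^ n) ^ 2
      = ((∑ x : Fin n → Bool, bval (f x)) / 2 ^ n)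
        * ((∑ x : Fin n → Bool, bval (f x)) / 2 ^ n) := by ring
  rw [hsq, hsq2]
  nlinarith [hmain]
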